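/- Define A(r) to be the number of tuples (F, C₊, C₋) of nonnegative integers satisfying F + 2(C₊ + C₋) ≤ r and F ≡ C₋ ≡ r (mod 2). Then A(r) = (1/96)(r+3)(r+4)(r+8) if r ≡ 0 (mod 4), A(r) = (1/96)(r+2)(r+6)(r+7) if r ≡ 2 (mod 4), A(r) = (1/96)(r−1)(r+3)(r+4) if r ≡ 1 (mod 4), and A(r) = (1/96)r(r+1)(r+5) if r ≡ 3 (mod 4). -/

import Mathlib

open Finset

/-- A cube of lattice points. -/
def box3 (N : ℕ) : Finset (ℕ × ℕ × ℕ) := range N ×ˢ range N ×ˢ range N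

lemma mem_box3 {N : ℕ} {t : ℕ × ℕ × ℕ} :
    t ∈ box3 N ↔ t.1 < N ∧ t.2.1 < N ∧ t.2.2 < N := by
  simp [box3, Finset.mem_product, Finset.mem_range]

/-- Count of `(x, c, y)` with `x + c + 2y ≤ n`. -/
def Bc (n : ℕ) : ℕ :=
  ((box3 (n + 1)).filter (fun t => t.1 + t.2.1 + 2 * t.2.2 ≤ n)).card

/-- Count of `(x, c, y)` with `x + c + 2y = m`. -/
def ec (m : ℕ) : ℕ :=
  ((box3 (m + 1)).filter (fun t => t.1 + t.2.1 + 2 * t.2.2 = m)).card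

lemma ec_zero : ec 0 = 1 := by decide

lemma ec_one : ec 1 = 2 := by decide

lemma Bc_zero : Bc 0 = 1 := by decide

lemma ec_rec (m : ℕ) : ec (m + 2) = ec m + (m + 3) := by
  classical
  have hU : (box3 (m + 3)).filter (fun t => t.1 + t.2.1 + 2 * t.2.2 = m + 2) =
      ((box3 (m + 3)).filter (fun t => t.1 + t.2.1 + 2 * t.2.2 = m + 2 ∧ t.2.2 ≠ 0)) ∪
      ((box3 (m + 3)).filter (fun t => t.1 + t.2.1 + 2 * t.2.2 = m + 2 ∧ t.2.2 = 0)) := by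
    ext ⟨x, c, y⟩
    simp only [Finset.mem_union, Finset.mem_filter, mem_box3, ne_eq]
    omega
  have hdisj : Disjoint
      ((box3 (m + 3)).filter (fun t => t.1 + t.2.1 + 2 * t.2.2 = m + 2 ∧ t.2.2 ≠ 0))
      ((box3 (m + 3)).filter (fun t => t.1 + t.2.1 + 2 * t.2.2 = m + 2 ∧ t.2.2 = 0)) := by
    rw [Finset.disjoint_left]
    intro a ha hb
    simp only [Finset.mem_filter, mem_box3, ne_eq] at ha hb
    omega
  have h1 : ((box3 (m + 3)).filter
      (fun t => t.1 + t.2.1 + 2 * t.2.2 = m + 2 ∧ t.2.2 ≠ 0)).card = ec m := by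
    rw [ec]
    apply Finset.card_nbij' (i := fun t => (t.1, t.2.1, t.2.2 - 1))
      (j := fun t => (t.1, t.2.1, t.2.2 + 1))
    · rintro ⟨x, c, y⟩ ha
      dsimp only at ha ⊢
      simp only [Finset.mem_coe, Finset.mem_filter, mem_box3, ne_eq] at ha ⊢
      omega
    · rintro ⟨x, c, y⟩ ha
      dsimp only at ha ⊢
      simp only [Finset.mem_coe, Finset.mem_filter, mem_box3, ne_eq] at ha ⊢
      omega
    · rintro ⟨x, c, y⟩ ha
      dsimp only at ha ⊢
      simp only [Finset.mem_coe, Finset.mem_filter, mem_box3, ne_eq] at ha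
      simp only [Finset.mem_coe, Prod.mk.injEq, true_and, and_true, eq_self_iff_true]
      omega
    · intro a _
      rfl
  have h2 : ((box3 (m + 3)).filter
      (fun t => t.1 + t.2.1 + 2 * t.2.2 = m + 2 ∧ t.2.2 = 0)).card = (range (m + 3)).card := by
    apply Finset.card_nbij' (i := fun t => t.1) (j := fun x => (x, m + 2 - x, 0))
    · rintro ⟨x, c, y⟩ ha
      dsimp only at ha ⊢
      simp only [Finset.mem_coe, Finset.mem_filter, mem_box3] at ha
      simp only [Finset.mem_coe, Finset.mem_range]
      omega
    · intro a ha
      simp only [Finset.mem_coe, Finset.mem_range] at ha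
      simp only [Finset.mem_coe, Finset.mem_filter, mem_box3, and_true]
      omega
    · rintro ⟨x, c, y⟩ ha
      dsimp only at ha ⊢
      simp only [Finset.mem_coe, Finset.mem_filter, mem_box3] at ha
      simp only [Finset.mem_coe, Prod.mk.injEq, true_and, and_true, eq_self_iff_true]
      omega
    · intro a _
      rfl
  calc ec (m + 2)
      = ((box3 (m + 3)).filter (fun t => t.1 + t.2.1 + 2 * t.2.2 = m + 2)).card := rfl
    _ = ((box3 (m + 3)).filter (fun t => t.1 + t.2.1 + 2 * t.2.2 = m + 2 ∧ t.2.2 ≠ 0)).card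
        + ((box3 (m + 3)).filter (fun t => t.1 + t.2.1 + 2 * t.2.2 = m + 2 ∧ t.2.2 = 0)).card := by
        rw [hU, Finset.card_union_of_disjoint hdisj]
    _ = ec m + (m + 3) := by rw [h1, h2, Finset.card_range]

lemma ec_formula (m : ℕ) : 4 * ec m + m % 2 = (m + 2) ^ 2 := by
  have key : ∀ k, (4 * ec k + k % 2 = (k + 2) ^ 2) ∧
      (4 * ec (k + 1) + (k + 1) % 2 = (k + 3) ^ 2) := by
    intro k
    induction k with
    | zero => refine ⟨?_, ?_⟩ <;> simp [ec_zero, ec_one]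
    | succ n ih =>
      refine ⟨ih.2, ?_⟩
      show 4 * ec (n + 2) + (n + 2) % 2 = (n + 1 + 3) ^ 2
      have h := ih.1
      have hr := ec_rec n
      have e1 : (n + 2) ^ 2 = n ^ 2 + 4 * n + 4 := by ring
      have e2 : (n + 1 + 3) ^ 2 = n ^ 2 + 8 * n + 16 := by ring
      omega
  exact (key m).1

lemma Bc_rec (n : ℕ) : Bc (n + 1) = Bc n + ec (n + 1) := by
  classical
  have hU : (box3 (n + 2)).filter (fun t => t.1 + t.2.1 + 2 * t.2.2 ≤ n + 1) =
      ((box3 (n + 2)).filter (fun t => t.1 + t.2.1 + 2 * t.2.2 ≤ n)) ∪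
      ((box3 (n + 2)).filter (fun t => t.1 + t.2.1 + 2 * t.2.2 = n + 1)) := by
    ext ⟨x, c, y⟩
    simp only [Finset.mem_union, Finset.mem_filter, mem_box3]
    omega
  have hdisj : Disjoint
      ((box3 (n + 2)).filter (fun t => t.1 + t.2.1 + 2 * t.2.2 ≤ n))
      ((box3 (n + 2)).filter (fun t => t.1 + t.2.1 + 2 * t.2.2 = n + 1)) := by
    rw [Finset.disjoint_left]
    intro a ha hb
    simp only [Finset.mem_filter, mem_box3] at ha hb
    omega
  have h1 : ((box3 (n + 2)).filter (fun t => t.1 + t.2.1 + 2 * t.2.2 ≤ n))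
      = ((box3 (n + 1)).filter (fun t => t.1 + t.2.1 + 2 * t.2.2 ≤ n)) := by
    ext ⟨x, c, y⟩
    simp only [Finset.mem_filter, mem_box3]
    omega
  calc Bc (n + 1)
      = ((box3 (n + 2)).filter (fun t => t.1 + t.2.1 + 2 * t.2.2 ≤ n + 1)).card := rfl
    _ = ((box3 (n + 2)).filter (fun t => t.1 + t.2.1 + 2 * t.2.2 ≤ n)).card
        + ((box3 (n + 2)).filter (fun t => t.1 + t.2.1 + 2 * t.2.2 = n + 1)).card := by
        rw [hU, Finset.card_union_of_disjoint hdisj]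
    _ = Bc n + ec (n + 1) := by rw [h1]; rfl

lemma Bc_formula (n : ℕ) :
    24 * Bc n + 3 * (n % 2) = 2 * n ^ 3 + 15 * n ^ 2 + 34 * n + 24 := by
  induction n with
  | zero => simp [Bc_zero]
  | succ k ih =>
    rw [Bc_rec]
    have he := ec_formula (k + 1)
    have e1 : (k + 1 + 2) ^ 2 = k ^ 2 + 6 * k + 9 := by ring
    have e2 : 2 * (k + 1) ^ 3 + 15 * (k + 1) ^ 2 + 34 * (k + 1) + 24
        = 2 * k ^ 3 + 15 * k ^ 2 + 34 * k + 24 + (6 * k ^ 2 + 36 * k + 51) := by ring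
    omega

/-- The original count as a finset cardinality. -/
def cnt (r : ℕ) : ℕ :=
  ((box3 (r + 1)).filter (fun t =>
    t.1 + 2 * (t.2.1 + t.2.2) ≤ r ∧ t.1 % 2 = r % 2 ∧ t.2.2 % 2 = r % 2)).card

lemma ncard_eq_cnt (r : ℕ) :
    Set.ncard {t : ℕ × ℕ × ℕ |
      t.1 + 2 * (t.2.1 + t.2.2) ≤ r ∧ t.1 % 2 = r % 2 ∧ t.2.2 % 2 = r % 2} = cnt r := by
  classical
  have hset : {t : ℕ × ℕ × ℕ |
      t.1 + 2 * (t.2.1 + t.2.2) ≤ r ∧ t.1 % 2 = r % 2 ∧ t.2.2 % 2 = r % 2} =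
      ↑((box3 (r + 1)).filter (fun t =>
        t.1 + 2 * (t.2.1 + t.2.2) ≤ r ∧ t.1 % 2 = r % 2 ∧ t.2.2 % 2 = r % 2)) := by
    ext ⟨x, c, y⟩
    simp only [Set.mem_setOf_eq, Finset.coe_filter, Finset.mem_coe, Finset.mem_filter, mem_box3,
      Set.mem_setOf_eq]
    omega
  rw [hset, Set.ncard_coe_finset]
  rfl

lemma cnt_eq_Bc (r n : ℕ) (hn : 2 * n + 3 * (r % 2) = r) : cnt r = Bc n := by
  classical
  rw [cnt, Bc]
  apply Finset.card_nbij' (i := fun t => ((t.1 - r % 2) / 2, t.2.1, (t.2.2 - r % 2) / 2))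
    (j := fun t => (2 * t.1 + r % 2, t.2.1, 2 * t.2.2 + r % 2))
  · rintro ⟨x, c, y⟩ ha
    dsimp only at ha ⊢
    simp only [Finset.mem_coe, Finset.mem_filter, mem_box3] at ha ⊢
    omega
  · rintro ⟨x, c, y⟩ ha
    dsimp only at ha ⊢
    simp only [Finset.mem_coe, Finset.mem_filter, mem_box3] at ha ⊢
    omega
  · rintro ⟨x, c, y⟩ ha
    dsimp only at ha ⊢
    simp only [Finset.mem_coe, Finset.mem_filter, mem_box3] at ha
    simp only [Finset.mem_coe, Prod.mk.injEq, true_and, and_true, eq_self_iff_true]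
    omega
  · rintro ⟨x, c, y⟩ ha
    dsimp only at ha ⊢
    simp only [Finset.mem_coe, Finset.mem_filter, mem_box3] at ha
    simp only [Finset.mem_coe, Prod.mk.injEq, true_and, and_true, eq_self_iff_true]
    omega

/-- Closed formulas for `A(r)`, the number of triples `(F, C₊, C₋)` of nonnegative integers
with `F + 2(C₊ + C₋) ≤ r` and `F ≡ C₋ ≡ r (mod 2)`. -/
theorem count_A_formula (r : ℕ) (A : ℕ)
    (hA : A = Set.ncard {t : ℕ × ℕ × ℕ |
      t.1 + 2 * (t.2.1 + t.2.2) ≤ r ∧ t.1 % 2 = r % 2 ∧ t.2.2 % 2 = r % 2}) :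
    (r % 4 = 0 → 96 * A = (r + 3) * (r + 4) * (r + 8)) ∧
    (r % 4 = 2 → 96 * A = (r + 2) * (r + 6) * (r + 7)) ∧
    (r % 4 = 1 → 96 * A = (r - 1) * (r + 3) * (r + 4)) ∧
    (r % 4 = 3 → 96 * A = r * (r + 1) * (r + 5)) := by
  rw [ncard_eq_cnt] at hA
  by_cases h1 : r = 1
  · subst h1
    have hc : cnt 1 = 0 := by decide
    rw [hc] at hA
    subst hA
    refine ⟨by omega, by omega, fun _ => by norm_num, by omega⟩
  · refine ⟨?_, ?_, ?_, ?_⟩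
    · intro h4
      obtain ⟨q, hq⟩ : ∃ q, r = 4 * q := ⟨r / 4, by omega⟩
      have hA' : A = Bc (2 * q) := by
        rw [hA, cnt_eq_Bc r (2 * q) (by omega)]
      have hB := Bc_formula (2 * q)
      have hmod : 2 * q % 2 = 0 := by omega
      rw [hmod, hA'.symm] at hB
      have hexp : 2 * (2 * q) ^ 3 + 15 * (2 * q) ^ 2 + 34 * (2 * q) + 24
          = 16 * q ^ 3 + 60 * q ^ 2 + 68 * q + 24 := by ring
      rw [hexp] at hB
      have h96 : 96 * A = 64 * q ^ 3 + 240 * q ^ 2 + 272 * q + 96 := by linarith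
      rw [hq, h96]; ring
    · intro h4
      obtain ⟨q, hq⟩ : ∃ q, r = 4 * q + 2 := ⟨r / 4, by omega⟩
      have hA' : A = Bc (2 * q + 1) := by
        rw [hA, cnt_eq_Bc r (2 * q + 1) (by omega)]
      have hB := Bc_formula (2 * q + 1)
      have hmod : (2 * q + 1) % 2 = 1 := by omega
      rw [hmod, hA'.symm] at hB
      have hexp : 2 * (2 * q + 1) ^ 3 + 15 * (2 * q + 1) ^ 2 + 34 * (2 * q + 1) + 24
          = 16 * q ^ 3 + 84 * q ^ 2 + 140 * q + 75 := by ring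
      rw [hexp] at hB
      have h96 : 96 * A = 64 * q ^ 3 + 336 * q ^ 2 + 560 * q + 288 := by linarith
      rw [hq, h96]; ring
    · intro h4
      obtain ⟨q, hq⟩ : ∃ q, r = 4 * q + 5 := ⟨(r - 5) / 4, by omega⟩
      have hA' : A = Bc (2 * q + 1) := by
        rw [hA, cnt_eq_Bc r (2 * q + 1) (by omega)]
      have hB := Bc_formula (2 * q + 1)
      have hmod : (2 * q + 1) % 2 = 1 := by omega
      rw [hmod, hA'.symm] at hB
      have hexp : 2 * (2 * q + 1) ^ 3 + 15 * (2 * q + 1) ^ 2 + 34 * (2 * q + 1) + 24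
          = 16 * q ^ 3 + 84 * q ^ 2 + 140 * q + 75 := by ring
      rw [hexp] at hB
      have h96 : 96 * A = 64 * q ^ 3 + 336 * q ^ 2 + 560 * q + 288 := by linarith
      have hr1 : r - 1 = 4 * q + 4 := by omega
      rw [hr1, hq, h96]; ring
    · intro h4
      obtain ⟨q, hq⟩ : ∃ q, r = 4 * q + 3 := ⟨r / 4, by omega⟩
      have hA' : A = Bc (2 * q) := by
        rw [hA, cnt_eq_Bc r (2 * q) (by omega)]
      have hB := Bc_formula (2 * q)
      have hmod : 2 * q % 2 = 0 := by omega
      rw [hmod, hA'.symm] at hB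
      have hexp : 2 * (2 * q) ^ 3 + 15 * (2 * q) ^ 2 + 34 * (2 * q) + 24
          = 16 * q ^ 3 + 60 * q ^ 2 + 68 * q + 24 := by ring
      rw [hexp] at hB
      have h96 : 96 * A = 64 * q ^ 3 + 240 * q ^ 2 + 272 * q + 96 := by linarith
      rw [hq, h96]; ring
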